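/- For each integer n ≥ 9, define h(x) = (n−6)²(n−3)(n²−7n+24)x⁸ − 2(n−6)²(n−2)(n²−n+6)x⁷ + (n−6)(n⁴+26n³−269n²+686n−516)x⁶ − 44(n−6)(n−3)(n−2)(n+2)x⁵ + (14n⁴+273n³−3034n²+5687n+1164)x⁴ − 2(n−2)(157n²−157n−2778)x³ + (49n³+1658n²−6539n+836)x² − 728(n−2)(n+5)x + 2704(n−1). Then h(0) > 0, h(2) > 0, and for n > 9, h(1) < 0; consequently for n > 9 the equation h(x)=0 has at least two roots in the open interval (0, 2), one in (0,1) and one in (1,2). -/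
import Mathlib

/-- The degree-8 polynomial `h(x)` with coefficients depending on the parameter `n`. -/
def hpoly (n x : ℝ) : ℝ :=
  (n - 6) ^ 2 * (n - 3) * (n ^ 2 - 7 * n + 24) * x ^ 8
    - 2 * (n - 6) ^ 2 * (n - 2) * (n ^ 2 - n + 6) * x ^ 7
    + (n - 6) * (n ^ 4 + 26 * n ^ 3 - 269 * n ^ 2 + 686 * n - 516) * x ^ 6
    - 44 * (n - 6) * (n - 3) * (n - 2) * (n + 2) * x ^ 5
    + (14 * n ^ 4 + 273 * n ^ 3 - 3034 * n ^ 2 + 5687 * n + 1164) * x ^ 4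
    - 2 * (n - 2) * (157 * n ^ 2 - 157 * n - 2778) * x ^ 3
    + (49 * n ^ 3 + 1658 * n ^ 2 - 6539 * n + 836) * x ^ 2
    - 728 * (n - 2) * (n + 5) * x
    + 2704 * (n - 1)

lemma hpoly_cont (n : ℝ) : Continuous fun x => hpoly n x := by
  unfold hpoly; fun_prop

theorem hpoly_signs_and_roots (n : ℤ) (hn : 9 ≤ n) :
    0 < hpoly (n : ℝ) 0 ∧ 0 < hpoly (n : ℝ) 2 ∧
    (9 < n → hpoly (n : ℝ) 1 < 0) ∧
    (9 < n → (∃ x : ℝ, 0 < x ∧ x < 1 ∧ hpoly (n : ℝ) x = 0) ∧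
      (∃ y : ℝ, 1 < y ∧ y < 2 ∧ hpoly (n : ℝ) y = 0)) := by
  have hn9 : (9 : ℝ) ≤ (n : ℝ) := by exact_mod_cast hn
  have h0 : 0 < hpoly (n : ℝ) 0 := by
    unfold hpoly; nlinarith [hn9]
  have h2 : 0 < hpoly (n : ℝ) 2 := by
    unfold hpoly
    nlinarith [pow_nonneg (by linarith : (0:ℝ) ≤ (n:ℝ) - 9) 5,
      pow_nonneg (by linarith : (0:ℝ) ≤ (n:ℝ) - 9) 4,
      pow_nonneg (by linarith : (0:ℝ) ≤ (n:ℝ) - 9) 3,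
      pow_nonneg (by linarith : (0:ℝ) ≤ (n:ℝ) - 9) 2]
  have h1 : 9 < n → hpoly (n : ℝ) 1 < 0 := by
    intro hgt
    have hgt' : (10 : ℝ) ≤ (n : ℝ) := by exact_mod_cast hgt
    unfold hpoly
    nlinarith [sq_nonneg ((n:ℝ)), mul_pos (mul_pos (by positivity : (0:ℝ) < (n:ℝ)^2)
      (by linarith : (0:ℝ) < (n:ℝ) - 1)) (by linarith : (0:ℝ) < (n:ℝ) - 9)]
  refine ⟨h0, h2, h1, fun hgt => ?_⟩
  have h1' := h1 hgt
  have hc : ContinuousOn (fun x => hpoly (n : ℝ) x) (Set.Icc 0 1) :=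
    (hpoly_cont _).continuousOn
  have hc2 : ContinuousOn (fun x => hpoly (n : ℝ) x) (Set.Icc 1 2) :=
    (hpoly_cont _).continuousOn
  constructor
  · have := intermediate_value_Ioo' (by norm_num : (0:ℝ) ≤ 1) hc
    have h0m : (0:ℝ) ∈ Set.Ioo (hpoly (n:ℝ) 1) (hpoly (n:ℝ) 0) := ⟨h1', h0⟩
    obtain ⟨x, hx, hfx⟩ := this h0m
    exact ⟨x, hx.1, hx.2, hfx⟩
  · have := intermediate_value_Ioo (by norm_num : (1:ℝ) ≤ 2) hc2
    have h0m : (0:ℝ) ∈ Set.Ioo (hpoly (n:ℝ) 1) (hpoly (n:ℝ) 2) := ⟨h1', h2⟩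
    obtain ⟨y, hy, hfy⟩ := this h0m
    exact ⟨y, hy.1, hy.2, hfy⟩
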